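/- Group-Contraction Lemma: For a social welfare function satisfying Pareto and IIA on at least 3 alternatives, if D is a decisive coalition with |D| ≥ 2, then there is a proper nonempty subset D' ⊊ D that is also decisive. -/

import Mathlib

/-- A strict linear order (complete, transitive, irreflexive preference) on `X`. -/
def SLO (X : Type*) : Type _ := {r : X → X → Prop // IsStrictTotalOrder X r}

/-- Pareto: unanimous strict preference is replicated socially. -/
def Pareto {X ι : Type*} (f : (ι → SLO X) → SLO X) : Prop :=
  ∀ P : ι → SLO X, ∀ a b : X, (∀ i, (P i).1 a b) → (f P).1 a b

/-- Independence of irrelevant alternatives. -/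
def IIA {X ι : Type*} (f : (ι → SLO X) → SLO X) : Prop :=
  ∀ P P' : ι → SLO X, ∀ a b : X,
    (∀ i, (P i).1 a b ↔ (P' i).1 a b) → ((f P).1 a b ↔ (f P').1 a b)

/-- A coalition `D` is `(a,b)`-decisive. -/
def PairDecisive {X ι : Type*} (f : (ι → SLO X) → SLO X) (D : Set ι) (a b : X) : Prop :=
  ∀ P : ι → SLO X, (∀ i ∈ D, (P i).1 a b) → (f P).1 a b

/-- A coalition is decisive if it is `(a,b)`-decisive for all distinct `a, b`. -/
def Decisive {X ι : Type*} (f : (ι → SLO X) → SLO X) (D : Set ι) : Prop :=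
  ∀ a b : X, a ≠ b → PairDecisive f D a b

/-- `d` is a dictator for `f`. -/
def IsDictator {X ι : Type*} (f : (ι → SLO X) → SLO X) (d : ι) : Prop :=
  ∀ P : ι → SLO X, ∀ a b : X, (P d).1 a b → (f P).1 a b


set_option linter.unusedSectionVars false

section Aux
variable {X ι : Type*} [Fintype X]

lemma SLO.trans' (r : SLO X) {a b c : X} (h1 : r.1 a b) (h2 : r.1 b c) : r.1 a c := by
  haveI := r.2
  exact _root_.trans_of r.1 h1 h2

lemma SLO.asymm' (r : SLO X) {a b : X} (h : r.1 a b) : ¬ r.1 b a := by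
  intro h'
  haveI := r.2
  exact absurd (_root_.trans_of r.1 h h') (irrefl_of r.1 a)

lemma SLO.total' (r : SLO X) {a b : X} (hne : a ≠ b) (h : ¬ r.1 a b) : r.1 b a := by
  haveI := r.2
  rcases trichotomous_of r.1 a b with h1 | h1 | h1
  · exact absurd h1 h
  · exact absurd h1 hne
  · exact h1

noncomputable def mkSLO (g : X → ℕ) : SLO X :=
  ⟨fun x y => g x < g y ∨ (g x = g y ∧ Fintype.equivFin X x < Fintype.equivFin X y), by
    refine { trichotomous := ?_, irrefl := ?_, trans := ?_ }
    · intro x y hxy hyx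
      rcases lt_trichotomy (g x) (g y) with h | h | h
      · exact absurd (Or.inl h) hxy
      · rcases lt_trichotomy (Fintype.equivFin X x) (Fintype.equivFin X y) with h2 | h2 | h2
        · exact absurd (Or.inr ⟨h, h2⟩) hxy
        · exact (Fintype.equivFin X).injective h2
        · exact absurd (Or.inr ⟨h.symm, h2⟩) hyx
      · exact absurd (Or.inl h) hyx
    · intro x h
      rcases h with h | ⟨_, h⟩ <;> exact absurd h (lt_irrefl _)
    · intro x y z hxy hyz
      rcases hxy with h1 | ⟨e1, h1⟩ <;> rcases hyz with h2 | ⟨e2, h2⟩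
      · exact Or.inl (h1.trans h2)
      · exact Or.inl (lt_of_lt_of_le h1 e2.le)
      · exact Or.inl (lt_of_le_of_lt e1.le h2)
      · exact Or.inr ⟨e1.trans e2, h1.trans h2⟩⟩

lemma mkSLO_lt {g : X → ℕ} {a b : X} (h : g a < g b) : (mkSLO g).1 a b := Or.inl h

lemma mkSLO_not {g : X → ℕ} {a b : X} (h : g a < g b) : ¬ (mkSLO g).1 b a := by
  rintro (h2 | ⟨h2, _⟩) <;> omega

lemma exists_third (hX : 3 ≤ Fintype.card X) (a b : X) : ∃ c, c ≠ a ∧ c ≠ b := by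
  classical
  by_contra h
  push_neg at h
  have hsub : (Finset.univ : Finset X) ⊆ {a, b} := by
    intro c _
    by_cases hca : c = a
    · simp [hca]
    · simp [h c hca]
  have h1 := Finset.card_le_card hsub
  have h2 : ({a, b} : Finset X).card ≤ 2 := by
    apply le_trans (Finset.card_insert_le a {b})
    simp
  rw [Finset.card_univ] at h1
  omega

variable {f : (ι → SLO X) → SLO X}

def SemiDec (f : (ι → SLO X) → SLO X) (D : Set ι) (a b : X) : Prop :=
  ∀ P : ι → SLO X, (∀ i ∈ D, (P i).1 a b) → (∀ i ∉ D, (P i).1 b a) → (f P).1 a b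

lemma pairDecisive_semiDec {D : Set ι} {a b : X} (h : PairDecisive f D a b) :
    SemiDec f D a b := fun P h1 _ => h P h1

lemma semiDec_of_witness (hI : IIA f) {D : Set ι} {a b : X}
    (Q : ι → SLO X) (h1 : ∀ i ∈ D, (Q i).1 a b) (h2 : ∀ i ∉ D, (Q i).1 b a)
    (hf : (f Q).1 a b) : SemiDec f D a b := by
  intro P hp1 hp2
  refine (hI Q P a b ?_).mp hf
  intro i
  by_cases hi : i ∈ D
  · simp [h1 i hi, hp1 i hi]
  · constructor
    · intro h
      exact absurd (h2 i hi) ((Q i).asymm' h)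
    · intro h
      exact absurd (hp2 i hi) ((P i).asymm' h)

lemma step1 (hPar : Pareto f) (hI : IIA f) {D : Set ι} {a b c : X}
    (hab : a ≠ b) (hca : c ≠ a) (hcb : c ≠ b)
    (hsd : SemiDec f D a b) : PairDecisive f D a c := by
  classical
  intro P hPD
  set g : ι → X → ℕ := fun i w =>
    if i ∈ D then (if w = a then 0 else if w = b then 1 else if w = c then 2 else 3)
    else (if w = b then 0 else
      if w = a then (if (P i).1 a c then 1 else 2) else
      if w = c then (if (P i).1 a c then 2 else 1) else 3) with hg
  set Q : ι → SLO X := fun i => mkSLO (g i) with hQ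
  have agree : ∀ i, (Q i).1 a c ↔ (P i).1 a c := by
    intro i
    by_cases hi : i ∈ D
    · constructor
      · intro _; exact hPD i hi
      · intro _
        exact mkSLO_lt (by simp [hg, hi, hab, hca, hcb, Ne.symm hab, Ne.symm hca, Ne.symm hcb])
    · by_cases hpc : (P i).1 a c
      · simp only [hpc, iff_true]
        exact mkSLO_lt (by simp [hg, hi, hpc, hab, hca, hcb, Ne.symm hab, Ne.symm hca, Ne.symm hcb])
      · simp only [hpc, iff_false]
        exact mkSLO_not (by simp [hg, hi, hpc, hab, hca, hcb, Ne.symm hab, Ne.symm hca, Ne.symm hcb])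
  have h1 : (f Q).1 a b := by
    refine hsd Q ?_ ?_
    · intro i hi
      exact mkSLO_lt (by simp [hg, hi, hab, hca, hcb, Ne.symm hab, Ne.symm hca, Ne.symm hcb])
    · intro i hi
      by_cases hpc : (P i).1 a c <;>
        exact mkSLO_lt (by simp [hg, hi, hpc, hab, hca, hcb, Ne.symm hab, Ne.symm hca, Ne.symm hcb])
  have h2 : (f Q).1 b c := by
    refine hPar Q b c ?_
    intro i
    by_cases hi : i ∈ D
    · exact mkSLO_lt (by simp [hg, hi, hab, hca, hcb, Ne.symm hab, Ne.symm hca, Ne.symm hcb])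
    · by_cases hpc : (P i).1 a c <;>
        exact mkSLO_lt (by simp [hg, hi, hpc, hab, hca, hcb, Ne.symm hab, Ne.symm hca, Ne.symm hcb])
  exact (hI Q P a c agree).mp ((f Q).trans' h1 h2)

lemma step2 (hPar : Pareto f) (hI : IIA f) {D : Set ι} {a b c : X}
    (hab : a ≠ b) (hca : c ≠ a) (hcb : c ≠ b)
    (hsd : SemiDec f D a b) : PairDecisive f D c b := by
  classical
  intro P hPD
  set g : ι → X → ℕ := fun i w =>
    if i ∈ D then (if w = c then 0 else if w = a then 1 else if w = b then 2 else 3)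
    else (if w = c then (if (P i).1 c b then 0 else 1) else
      if w = b then (if (P i).1 c b then 1 else 0) else
      if w = a then 2 else 3) with hg
  set Q : ι → SLO X := fun i => mkSLO (g i) with hQ
  have agree : ∀ i, (Q i).1 c b ↔ (P i).1 c b := by
    intro i
    by_cases hi : i ∈ D
    · constructor
      · intro _; exact hPD i hi
      · intro _
        exact mkSLO_lt (by simp [hg, hi, hab, hca, hcb, Ne.symm hab, Ne.symm hca, Ne.symm hcb])
    · by_cases hpc : (P i).1 c b
      · simp only [hpc, iff_true]
        exact mkSLO_lt (by simp [hg, hi, hpc, hab, hca, hcb, Ne.symm hab, Ne.symm hca, Ne.symm hcb])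
      · simp only [hpc, iff_false]
        exact mkSLO_not (by simp [hg, hi, hpc, hab, hca, hcb, Ne.symm hab, Ne.symm hca, Ne.symm hcb])
  have h1 : (f Q).1 c a := by
    refine hPar Q c a ?_
    intro i
    by_cases hi : i ∈ D
    · exact mkSLO_lt (by simp [hg, hi, hab, hca, hcb, Ne.symm hab, Ne.symm hca, Ne.symm hcb])
    · by_cases hpc : (P i).1 c b <;>
        exact mkSLO_lt (by simp [hg, hi, hpc, hab, hca, hcb, Ne.symm hab, Ne.symm hca, Ne.symm hcb])
  have h2 : (f Q).1 a b := by
    refine hsd Q ?_ ?_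
    · intro i hi
      exact mkSLO_lt (by simp [hg, hi, hab, hca, hcb, Ne.symm hab, Ne.symm hca, Ne.symm hcb])
    · intro i hi
      by_cases hpc : (P i).1 c b <;>
        exact mkSLO_lt (by simp [hg, hi, hpc, hab, hca, hcb, Ne.symm hab, Ne.symm hca, Ne.symm hcb])
  exact (hI Q P c b agree).mp ((f Q).trans' h1 h2)

lemma lemA (hX : 3 ≤ Fintype.card X) (hPar : Pareto f) (hI : IIA f) {D : Set ι} {a b : X}
    (hab : a ≠ b) (hsd : SemiDec f D a b) :
    ∀ y, y ≠ a → PairDecisive f D a y := by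
  intro y hy
  by_cases hyb : y = b
  · subst hyb
    obtain ⟨c, hca, hcb⟩ := exists_third hX a y
    have d1 : PairDecisive f D a c := step1 hPar hI hab hca hcb hsd
    exact step1 hPar hI (Ne.symm hca) hy (Ne.symm hcb) (pairDecisive_semiDec d1)
  · exact step1 hPar hI hab hy hyb hsd

lemma lemB (hX : 3 ≤ Fintype.card X) (hPar : Pareto f) (hI : IIA f) {D : Set ι} {a b : X}
    (hab : a ≠ b) (hsd : SemiDec f D a b) :
    ∀ x, x ≠ b → PairDecisive f D x b := by
  intro x hx
  by_cases hxa : x = a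
  · subst hxa
    exact lemA hX hPar hI hab hsd b (Ne.symm hab)
  · exact step2 hPar hI hab hxa hx hsd

lemma decisive_of_semiDec (hX : 3 ≤ Fintype.card X) (hPar : Pareto f) (hI : IIA f)
    {D : Set ι} {a b : X} (hab : a ≠ b) (hsd : SemiDec f D a b) : Decisive f D := by
  intro x y hxy
  by_cases hxb : x = b
  · subst hxb
    obtain ⟨c, hca, hcx⟩ := exists_third hX a x
    have d1 : PairDecisive f D c x := step2 hPar hI hab hca hcx hsd
    have d2 : PairDecisive f D c a :=
      lemA hX hPar hI hcx (pairDecisive_semiDec d1) a (Ne.symm hca)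
    have d3 : PairDecisive f D x a :=
      lemB hX hPar hI hca (pairDecisive_semiDec d2) x (Ne.symm hab)
    exact lemA hX hPar hI (Ne.symm hab) (pairDecisive_semiDec d3) y (Ne.symm hxy)
  · have d1 : PairDecisive f D x b := lemB hX hPar hI hab hsd x hxb
    exact lemA hX hPar hI hxb (pairDecisive_semiDec d1) y (Ne.symm hxy)

end Aux

theorem group_contraction {X ι : Type*} [Fintype X] [Fintype ι]
    (hX : 3 ≤ Fintype.card X)
    (f : (ι → SLO X) → SLO X) (hP : Pareto f) (hI : IIA f)
    (D : Finset ι) (hcard : 2 ≤ D.card) (hD : Decisive f (D : Set ι)) :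
    ∃ D' : Finset ι, D' ⊂ D ∧ D'.Nonempty ∧ Decisive f (D' : Set ι) := by
  classical
  obtain ⟨i₀, hi₀, j, hj, hij⟩ := Finset.one_lt_card.mp (by omega : 1 < D.card)
  -- three distinct alternatives
  set e := (Fintype.equivFin X).symm with he
  set x := e ⟨0, by omega⟩ with hx
  set y := e ⟨1, by omega⟩ with hy
  set z := e ⟨2, by omega⟩ with hz
  have hxy : x ≠ y := fun h => by simpa [Fin.ext_iff] using e.injective h
  have hxz : x ≠ z := fun h => by simpa [Fin.ext_iff] using e.injective h
  have hyz : y ≠ z := fun h => by simpa [Fin.ext_iff] using e.injective h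
  -- the pivotal profile
  set g : ι → X → ℕ := fun i w =>
    if i = i₀ then (if w = x then 0 else if w = y then 1 else if w = z then 2 else 3)
    else if i ∈ D then (if w = y then 0 else if w = z then 1 else if w = x then 2 else 3)
    else (if w = z then 0 else if w = x then 1 else if w = y then 2 else 3) with hg
  set Q : ι → SLO X := fun i => mkSLO (g i) with hQ
  have hQyz : (f Q).1 y z := by
    refine hD y z hyz Q ?_
    intro i hi
    simp only [Finset.mem_coe] at hi
    by_cases hii : i = i₀ <;>
      exact mkSLO_lt (by simp [hg, hii, hi, hxy, hxz, hyz, Ne.symm hxy, Ne.symm hxz, Ne.symm hyz])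
  by_cases hfxz : (f Q).1 x z
  · -- singleton {i₀} is decisive
    refine ⟨{i₀}, ?_, ⟨i₀, Finset.mem_singleton_self i₀⟩, ?_⟩
    · rw [Finset.ssubset_iff_of_subset (by simpa using hi₀)]
      exact ⟨j, hj, by simpa using Ne.symm hij⟩
    · refine decisive_of_semiDec hX hP hI hxz ?_
      refine semiDec_of_witness hI Q ?_ ?_ hfxz
      · intro i hi
        simp only [Finset.coe_singleton, Set.mem_singleton_iff] at hi
        exact mkSLO_lt (by simp [hg, hi, hxy, hxz, hyz, Ne.symm hxy, Ne.symm hxz, Ne.symm hyz])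
      · intro i hi
        simp only [Finset.coe_singleton, Set.mem_singleton_iff] at hi
        by_cases hiD : i ∈ D <;>
          exact mkSLO_lt (by simp [hg, hi, hiD, hxy, hxz, hyz, Ne.symm hxy, Ne.symm hxz, Ne.symm hyz])
  · -- D \ {i₀} is decisive
    have hfzx : (f Q).1 z x := (f Q).total' hxz hfxz
    have hfyx : (f Q).1 y x := (f Q).trans' hQyz hfzx
    refine ⟨D.erase i₀, Finset.erase_ssubset hi₀, ?_, ?_⟩
    · refine Finset.card_pos.mp ?_
      have := Finset.card_erase_of_mem hi₀
      omega
    · refine decisive_of_semiDec hX hP hI (Ne.symm hxy) ?_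
      refine semiDec_of_witness hI Q ?_ ?_ hfyx
      · intro i hi
        simp only [Finset.coe_erase, Set.mem_diff, Finset.mem_coe, Set.mem_singleton_iff] at hi
        exact mkSLO_lt (by simp [hg, hi.1, hi.2, hxy, hxz, hyz, Ne.symm hxy, Ne.symm hxz, Ne.symm hyz])
      · intro i hi
        simp only [Finset.coe_erase, Set.mem_diff, Finset.mem_coe, Set.mem_singleton_iff, not_and,
          not_not] at hi
        by_cases hii : i = i₀
        · exact mkSLO_lt (by simp [hg, hii, hxy, hxz, hyz, Ne.symm hxy, Ne.symm hxz, Ne.symm hyz])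
        · have hiD : i ∉ D := fun h => hii (hi h)
          exact mkSLO_lt (by simp [hg, hii, hiD, hxy, hxz, hyz, Ne.symm hxy, Ne.symm hxz, Ne.symm hyz])
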